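/- Ron Graham's sequence is injective: for all positive integers n and n', if g(n) = g(n') then n = n'. -/
import Mathlib

open Finset

/-- `Corr n k` says there is a square-product sequence (a nonempty finite set of
positive integers whose product is a perfect square) with least term `n` and
greatest term `k`. -/
def Corr (n k : ℕ) : Prop :=
  ∃ S : Finset ℕ, (∀ a ∈ S, 0 < a) ∧ IsSquare (∏ a ∈ S, a) ∧
    n ∈ S ∧ k ∈ S ∧ ∀ a ∈ S, n ≤ a ∧ a ≤ k

/-- Ron Graham's sequence: the least `k` such that there is a square-product
sequence with least term `n` and greatest term `k`. -/
noncomputable def g (n : ℕ) : ℕ := sInf {k | Corr n k}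

lemma corr_four (n : ℕ) (hn : 0 < n) : Corr n (4 * n) := by
  have hne : n ≠ 4 * n := by omega
  refine ⟨{n, 4 * n}, ?_, ?_, ?_, ?_, ?_⟩
  · intro a ha
    rcases Finset.mem_insert.mp ha with rfl | ha
    · exact hn
    · rw [Finset.mem_singleton] at ha; omega
  · rw [Finset.prod_pair hne]
    exact ⟨2 * n, by ring⟩
  · exact Finset.mem_insert_self _ _
  · exact Finset.mem_insert_of_mem (Finset.mem_singleton_self _)
  · intro a ha
    rcases Finset.mem_insert.mp ha with rfl | ha
    · omega
    · rw [Finset.mem_singleton] at ha; omega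

lemma corr_g (n : ℕ) (hn : 0 < n) : Corr n (g n) := by
  have hne : {k | Corr n k}.Nonempty := ⟨4 * n, corr_four n hn⟩
  exact Nat.sInf_mem hne

lemma sq_cancel (a c b : ℕ) (hc : 0 < c) (h : a * (c * c) = b * b) : IsSquare a := by
  have hdvd : c ∣ b := by
    have h2 : c ^ 2 ∣ b ^ 2 := ⟨a, by nlinarith⟩
    exact (Nat.pow_dvd_pow_iff two_ne_zero).mp h2
  obtain ⟨d, rfl⟩ := hdvd
  refine ⟨d, ?_⟩
  have : a * (c * c) = (d * d) * (c * c) := by nlinarith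
  exact Nat.eq_of_mul_eq_mul_right (by positivity) this

lemma key (n n' : ℕ) (hn : 0 < n) (hlt : n < n') (h : g n = g n') : False := by
  have hn' : 0 < n' := hn.trans hlt
  obtain ⟨S, hSpos, hSsq, hnS, hkS, hSb⟩ := corr_g n hn
  obtain ⟨S', hS'pos, hS'sq, hn'S', hkS', hS'b⟩ := corr_g n' hn'
  set k := g n' with hk
  rw [h] at hkS hSb
  -- symmetric difference
  set T : Finset ℕ := (S \ S') ∪ (S' \ S) with hT
  have hmemT : ∀ a, a ∈ T ↔ (a ∈ S ∧ a ∉ S') ∨ (a ∈ S' ∧ a ∉ S) := by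
    intro a
    simp [hT, Finset.mem_union, Finset.mem_sdiff]
  have hnT : n ∈ T := by
    rw [hmemT]
    left
    refine ⟨hnS, fun hmem => ?_⟩
    exact absurd ((hS'b n hmem).1) (by omega)
  have hkT : k ∉ T := by
    rw [hmemT]
    rintro (⟨_, hk2⟩ | ⟨_, hk2⟩) <;> exact hk2 (by assumption)
  -- product of T is square
  have hprod : (∏ a ∈ T, a) * ((∏ a ∈ S ∩ S', a) * (∏ a ∈ S ∩ S', a)) =
      (∏ a ∈ S, a) * (∏ a ∈ S', a) := by
    have h1 : T = (S ∪ S') \ (S ∩ S') := by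
      ext a
      rw [hmemT]
      simp only [Finset.mem_sdiff, Finset.mem_union, Finset.mem_inter]
      tauto
    have h2 : (∏ a ∈ (S ∪ S') \ (S ∩ S'), a) * (∏ a ∈ S ∩ S', a) =
        ∏ a ∈ S ∪ S', a :=
      Finset.prod_sdiff (Finset.inter_subset_union)
    have h3 : (∏ a ∈ S ∪ S', a) * (∏ a ∈ S ∩ S', a) =
        (∏ a ∈ S, a) * (∏ a ∈ S', a) := Finset.prod_union_inter
    rw [h1]
    calc (∏ a ∈ (S ∪ S') \ (S ∩ S'), a) * ((∏ a ∈ S ∩ S', a) * (∏ a ∈ S ∩ S', a))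
        = ((∏ a ∈ (S ∪ S') \ (S ∩ S'), a) * (∏ a ∈ S ∩ S', a)) * (∏ a ∈ S ∩ S', a) := by
          ring
      _ = (∏ a ∈ S ∪ S', a) * (∏ a ∈ S ∩ S', a) := by rw [h2]
      _ = _ := h3
  obtain ⟨r, hr⟩ := hSsq
  obtain ⟨r', hr'⟩ := hS'sq
  have hIpos : 0 < ∏ a ∈ S ∩ S', a :=
    Finset.prod_pos fun a ha => hSpos a (Finset.mem_inter.mp ha).1
  have hTsq : IsSquare (∏ a ∈ T, a) := by
    refine sq_cancel _ _ (r * r') hIpos ?_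
    rw [hprod, hr, hr']; ring
  -- T bounds
  have hTpos : ∀ a ∈ T, 0 < a := by
    intro a ha
    rcases (hmemT a).mp ha with ⟨h1, _⟩ | ⟨h1, _⟩
    exacts [hSpos a h1, hS'pos a h1]
  have hTlb : ∀ a ∈ T, n ≤ a := by
    intro a ha
    rcases (hmemT a).mp ha with ⟨h1, _⟩ | ⟨h1, _⟩
    · exact (hSb a h1).1
    · exact le_of_lt (lt_of_lt_of_le hlt (hS'b a h1).1)
  have hTne : T.Nonempty := ⟨n, hnT⟩
  set m := T.max' hTne with hm
  have hmT : m ∈ T := T.max'_mem hTne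
  have hmk : m < k := by
    have hle : m ≤ k := by
      rcases (hmemT m).mp hmT with ⟨h1, _⟩ | ⟨h1, _⟩
      · exact (hSb m h1).2
      · exact (hS'b m h1).2
    rcases lt_or_eq_of_le hle with h1 | h1
    · exact h1
    · exact absurd (h1 ▸ hmT) hkT
  have hCorr : Corr n m := by
    refine ⟨T, hTpos, hTsq, hnT, hmT, fun a ha => ⟨hTlb a ha, T.le_max' a ha⟩⟩
  have : g n ≤ m := Nat.sInf_le hCorr
  omega

theorem g_injective (n n' : ℕ) (hn : 0 < n) (hn' : 0 < n') (h : g n = g n') : n = n' := by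
  rcases lt_trichotomy n n' with h1 | h1 | h1
  · exact absurd (key n n' hn h1 h) (by simp)
  · exact h1
  · exact absurd (key n' n hn' h1 h.symm) (by simp)
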